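/- arXiv:2604.25746 — 2 statements merged into one kernel-verified Lean document; each statement's English description precedes it below -/
import Mathlib

section
/- Let {T^t}_{t∈ℝ} be a measurable measure-preserving flow on a probability space (X, ℬ, μ), and let A ∈ ℬ. For τ > 0 and x ∈ X define m_τ^A(x) = (1/(2τ)) · Leb({t ∈ [−τ, τ] : T^t(x) ∈ A}). Then for μ-almost every x ∈ A, one has m_τ^A(x) → 1 as τ → 0⁺. -/
open MeasureTheory Filter Set


lemma aux_ratio_le_one (S : Set ℝ) {τ : ℝ} (hτ : 0 < τ) :
    (1 / (2 * τ)) * ((volume : Measure ℝ) (S ∩ Icc (-τ) τ)).toReal ≤ 1 := by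
  have h1 : (volume : Measure ℝ) (S ∩ Icc (-τ) τ) ≤ ENNReal.ofReal (2 * τ) := by
    refine le_trans (measure_mono inter_subset_right) ?_
    rw [Real.volume_Icc]
    exact le_of_eq (by ring_nf)
  have h2 : ((volume : Measure ℝ) (S ∩ Icc (-τ) τ)).toReal ≤ 2 * τ := by
    have := ENNReal.toReal_mono ENNReal.ofReal_ne_top h1
    rwa [ENNReal.toReal_ofReal (by positivity)] at this
  calc (1 / (2 * τ)) * ((volume : Measure ℝ) (S ∩ Icc (-τ) τ)).toReal
      ≤ (1 / (2 * τ)) * (2 * τ) := mul_le_mul_of_nonneg_left h2 (by positivity)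
    _ = 1 := by field_simp

lemma aux_tendsto_of_rat (S : Set ℝ)
    (h : ∀ k : ℕ, ∃ m : ℕ, ∀ q : ℚ, 0 < (q : ℝ) → (q : ℝ) < 1 / (m + 1) →
      1 - 1 / (k + 1) ≤ (1 / (2 * (q : ℝ))) *
        ((volume : Measure ℝ) (S ∩ Icc (-(q : ℝ)) (q : ℝ))).toReal) :
    Tendsto (fun τ : ℝ => (1 / (2 * τ)) * ((volume : Measure ℝ) (S ∩ Icc (-τ) τ)).toReal)
      (nhdsWithin 0 (Ioi 0)) (nhds 1) := by
  rw [Metric.tendsto_nhdsWithin_nhds]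
  intro ε hε
  obtain ⟨k, hk⟩ : ∃ k : ℕ, (1 : ℝ) / (k + 1) < min (ε / 3) (1 / 2) :=
    exists_nat_one_div_lt (by positivity)
  obtain ⟨m, hm⟩ := h k
  set η : ℝ := 1 / (k + 1) with hηdef
  have hη0 : 0 < η := by positivity
  have hηε : η < ε / 3 := lt_of_lt_of_le hk (min_le_left _ _)
  have hη2 : η < 1 / 2 := lt_of_lt_of_le hk (min_le_right _ _)
  refine ⟨1 / (m + 1), by positivity, ?_⟩
  intro τ hτ hdist
  have hτ0 : 0 < τ := hτ
  have hτδ : τ < 1 / (m + 1) := by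
    rwa [Real.dist_eq, sub_zero, abs_of_pos hτ0] at hdist
  obtain ⟨q, hq1, hq2⟩ := exists_rat_btwn (show (1 - η) * τ < τ by nlinarith)
  have hq0 : 0 < (q : ℝ) := lt_trans (by nlinarith) hq1
  have hqm := hm q hq0 (lt_trans hq2 hτδ)
  have hfin : (volume : Measure ℝ) (S ∩ Icc (-τ) τ) ≠ ⊤ :=
    (lt_of_le_of_lt (measure_mono inter_subset_right)
      (by rw [Real.volume_Icc]; exact ENNReal.ofReal_lt_top)).ne
  have hmono : ((volume : Measure ℝ) (S ∩ Icc (-(q : ℝ)) (q : ℝ))).toReal ≤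
      ((volume : Measure ℝ) (S ∩ Icc (-τ) τ)).toReal := by
    refine ENNReal.toReal_mono hfin (measure_mono (inter_subset_inter_right _
      (Icc_subset_Icc (by linarith) hq2.le)))
  set a : ℝ := ((volume : Measure ℝ) (S ∩ Icc (-(q : ℝ)) (q : ℝ))).toReal with hadef
  set b : ℝ := ((volume : Measure ℝ) (S ∩ Icc (-τ) τ)).toReal with hbdef
  have ha : 2 * (q : ℝ) * (1 - η) ≤ a := by
    have h2q : (0:ℝ) < 2 * q := by linarith
    have := mul_le_mul_of_nonneg_right hqm h2q.le
    calc 2 * (q : ℝ) * (1 - η) = (1 - η) * (2 * q) := by ring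
      _ ≤ 1 / (2 * (q : ℝ)) * a * (2 * q) := this
      _ = a := by field_simp
  have hb : 2 * (q : ℝ) * (1 - η) ≤ b := le_trans ha hmono
  have hkey : 1 - 2 * η ≤ (1 / (2 * τ)) * b := by
    rw [one_div, inv_mul_eq_div, le_div_iff₀ (by linarith : (0:ℝ) < 2 * τ)]
    nlinarith [sq_nonneg η, hq1, hτ0, hη0, hη2]
  have hle1 : (1 / (2 * τ)) * b ≤ 1 := aux_ratio_le_one S hτ0
  rw [Real.dist_eq, abs_of_nonpos (by linarith)]
  linarith

lemma aux_density (S : Set ℝ) (hS : MeasurableSet S) :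
    ∀ᵐ s : ℝ, s ∈ S → Tendsto (fun τ : ℝ =>
        (1 / (2 * τ)) * ((volume : Measure ℝ) (S ∩ Metric.closedBall s τ)).toReal)
      (nhdsWithin 0 (Ioi 0)) (nhds 1) := by
  filter_upwards [Besicovitch.ae_tendsto_measure_inter_div_of_measurableSet volume hS]
    with s hs hsS
  have h1 : Tendsto (fun r : ℝ => (volume : Measure ℝ) (S ∩ Metric.closedBall s r) /
      (volume : Measure ℝ) (Metric.closedBall s r)) (nhdsWithin 0 (Ioi 0)) (nhds 1) := by
    have hind : S.indicator (1 : ℝ → ENNReal) s = 1 := by simp [indicator_of_mem hsS]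
    rwa [hind] at hs
  have h2 := (ENNReal.tendsto_toReal (a := 1) (by simp)).comp h1
  simp only [ENNReal.toReal_one] at h2
  refine h2.congr' ?_
  filter_upwards [self_mem_nhdsWithin] with r hr
  have hr0 : 0 < r := hr
  simp only [Function.comp_apply]
  rw [ENNReal.toReal_div, Real.volume_closedBall, ENNReal.toReal_ofReal (by positivity)]
  ring


theorem local_time_density_tendsto_one
    {X : Type*} [MeasurableSpace X] (μ : Measure X) [IsProbabilityMeasure μ]
    (T : ℝ → X → X)
    (hT0 : T 0 = id) (hTadd : ∀ s t : ℝ, T (t + s) = T t ∘ T s)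
    (hTmeas : Measurable fun p : ℝ × X => T p.1 p.2)
    (hTpres : ∀ t : ℝ, MeasurePreserving (T t) μ μ)
    (A : Set X) (hA : MeasurableSet A) :
    ∀ᵐ x ∂μ, x ∈ A →
      Tendsto (fun τ : ℝ =>
          (1 / (2 * τ)) * (volume {t : ℝ | t ∈ Icc (-τ) τ ∧ T t x ∈ A}).toReal)
        (nhdsWithin 0 (Ioi 0)) (nhds 1) := by
  classical
  set E : X → Set ℝ := fun x => {t : ℝ | T t x ∈ A} with hE
  have hset : ∀ (x : X) (τ : ℝ),
      {t : ℝ | t ∈ Icc (-τ) τ ∧ T t x ∈ A} = E x ∩ Icc (-τ) τ := by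
    intro x τ; ext t; simp [hE, and_comm]
  -- the countable characterization of density at 0
  set Q : X → Prop := fun x => ∀ k : ℕ, ∃ m : ℕ, ∀ q : ℚ, 0 < (q : ℝ) →
      (q : ℝ) < 1 / (m + 1) → 1 - 1 / (k + 1) ≤
      (1 / (2 * (q : ℝ))) * (volume (E x ∩ Icc (-(q : ℝ)) (q : ℝ))).toReal with hQ
  -- measurability of Q
  have hmeasq : ∀ q : ℚ, Measurable fun x => (volume (E x ∩ Icc (-(q : ℝ)) (q : ℝ))).toReal := by
    intro q
    have hWq : MeasurableSet {p : ℝ × X | T p.1 p.2 ∈ A ∧ p.1 ∈ Icc (-(q : ℝ)) (q : ℝ)} :=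
      (hTmeas hA).inter (measurable_fst measurableSet_Icc)
    have h1 : (fun x => volume (E x ∩ Icc (-(q : ℝ)) (q : ℝ))) =
        fun x => volume ((fun t => (t, x)) ⁻¹'
          {p : ℝ × X | T p.1 p.2 ∈ A ∧ p.1 ∈ Icc (-(q : ℝ)) (q : ℝ)}) := by
      funext x; rfl
    exact ENNReal.measurable_toReal.comp (h1 ▸ measurable_measure_prodMk_right hWq)
  have hQmeas : MeasurableSet {x | Q x} := by
    have : {x | Q x} = ⋂ k : ℕ, ⋃ m : ℕ, ⋂ q : ℚ,
        {x | 0 < (q : ℝ) → (q : ℝ) < 1 / (m + 1) → 1 - 1 / (k + 1) ≤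
          (1 / (2 * (q : ℝ))) * (volume (E x ∩ Icc (-(q : ℝ)) (q : ℝ))).toReal} := by
      ext x; simp [hQ]
    rw [this]
    refine MeasurableSet.iInter fun k => MeasurableSet.iUnion fun m =>
      MeasurableSet.iInter fun q => ?_
    by_cases h1 : 0 < (q : ℝ) ∧ (q : ℝ) < 1 / (m + 1)
    · have : {x : X | 0 < (q : ℝ) → (q : ℝ) < 1 / (m + 1) → 1 - 1 / (k + 1) ≤
          (1 / (2 * (q : ℝ))) * (volume (E x ∩ Icc (-(q : ℝ)) (q : ℝ))).toReal} =
          {x : X | 1 - 1 / (k + 1) ≤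
          (1 / (2 * (q : ℝ))) * (volume (E x ∩ Icc (-(q : ℝ)) (q : ℝ))).toReal} := by
        ext x; exact ⟨fun h => h h1.1 h1.2, fun h _ _ => h⟩
      rw [this]
      exact measurableSet_le measurable_const (measurable_const.mul (hmeasq q))
    · have : {x : X | 0 < (q : ℝ) → (q : ℝ) < 1 / (m + 1) → 1 - 1 / (k + 1) ≤
          (1 / (2 * (q : ℝ))) * (volume (E x ∩ Icc (-(q : ℝ)) (q : ℝ))).toReal} = univ := by
        ext x
        simp only [mem_setOf_eq, mem_univ, iff_true]
        intro hq0 hqm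
        exact absurd ⟨hq0, hqm⟩ h1
      rw [this]; exact MeasurableSet.univ
  -- tendsto implies Q
  have hPQ : ∀ y : X, Tendsto (fun τ : ℝ =>
      (1 / (2 * τ)) * (volume (E y ∩ Icc (-τ) τ)).toReal)
      (nhdsWithin 0 (Ioi 0)) (nhds 1) → Q y := by
    intro y hy k
    have hε : (0 : ℝ) < 1 / (k + 1) := by positivity
    rw [Metric.tendsto_nhdsWithin_nhds] at hy
    obtain ⟨δ, hδ0, hδ⟩ := hy _ hε
    obtain ⟨m, hm⟩ := exists_nat_one_div_lt hδ0
    refine ⟨m, fun q hq0 hqm => ?_⟩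
    have hd := hδ (show (q : ℝ) ∈ Ioi 0 from hq0)
      (by rw [Real.dist_eq, sub_zero, abs_of_pos hq0]; linarith)
    rw [Real.dist_eq] at hd
    have := abs_lt.mp hd
    linarith [this.1]
  -- the bad set
  set N : Set X := A ∩ {x | Q x}ᶜ with hN
  have hNmeas : MeasurableSet N := hA.inter hQmeas.compl
  -- each x-orbit hits N for a null set of times
  have hkey : ∀ x : X, volume {s : ℝ | T s x ∈ N} = 0 := by
    intro x
    have hEx : MeasurableSet (E x) := by
      have : Measurable fun t : ℝ => T t x :=
        hTmeas.comp (measurable_id.prodMk measurable_const)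
      exact this hA
    have hd := aux_density (E x) hEx
    rw [ae_iff] at hd
    refine measure_mono_null ?_ hd
    intro s hs
    simp only [mem_setOf_eq] at hs ⊢
    intro himp
    obtain ⟨hsA, hsnQ⟩ := hs
    have hsE : s ∈ E x := hsA
    refine hsnQ (hPQ (T s x) ?_)
    refine (himp hsE).congr fun τ => ?_
    congr 1
    have hEtrans : E (T s x) ∩ Icc (-τ) τ =
        (fun t : ℝ => t + s) ⁻¹' (E x ∩ Metric.closedBall s τ) := by
      ext t
      simp only [hE, mem_inter_iff, mem_setOf_eq, mem_preimage, mem_Icc,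
        Real.closedBall_eq_Icc]
      constructor
      · rintro ⟨h1, h2, h3⟩
        rw [show T t (T s x) = T (t + s) x by rw [hTadd s t]; rfl] at h1
        exact ⟨h1, by constructor <;> linarith⟩
      · rintro ⟨h1, h2, h3⟩
        rw [show T t (T s x) = T (t + s) x by rw [hTadd s t]; rfl]
        exact ⟨h1, by linarith, by linarith⟩
    rw [hEtrans, measure_preimage_add_right]
  -- Fubini argument
  set W : Set (ℝ × X) := {p : ℝ × X | p.1 ∈ Icc (0 : ℝ) 1 ∧ T p.1 p.2 ∈ N} with hW
  have hWmeas : MeasurableSet W :=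
    (measurable_fst measurableSet_Icc).inter (hTmeas hNmeas)
  have h1 : ((volume.restrict (Icc (0 : ℝ) 1)).prod μ) W = μ N := by
    rw [Measure.prod_apply hWmeas]
    have heq : ∀ s ∈ Icc (0 : ℝ) 1, μ (Prod.mk s ⁻¹' W) = μ N := by
      intro s hsI
      have : Prod.mk s ⁻¹' W = T s ⁻¹' N := by
        obtain ⟨hs0, hs1⟩ := hsI
        ext x; simp [hW, hs0, hs1]
      rw [this, (hTpres s).measure_preimage hNmeas.nullMeasurableSet]
    calc ∫⁻ s, μ (Prod.mk s ⁻¹' W) ∂(volume.restrict (Icc (0 : ℝ) 1))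
        = ∫⁻ s in Icc (0 : ℝ) 1, μ N ∂volume := by
          refine setLIntegral_congr_fun measurableSet_Icc heq
      _ = μ N := by
          rw [setLIntegral_const, Real.volume_Icc]
          simp
  have h2 : ((volume.restrict (Icc (0 : ℝ) 1)).prod μ) W = 0 := by
    rw [Measure.prod_apply_symm hWmeas]
    have hz : ∀ x : X, (volume.restrict (Icc (0 : ℝ) 1)) ((fun s => (s, x)) ⁻¹' W) = 0 := by
      intro x
      refine le_antisymm ?_ zero_le
      calc (volume.restrict (Icc (0 : ℝ) 1)) ((fun s => (s, x)) ⁻¹' W)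
          ≤ volume ((fun s => (s, x)) ⁻¹' W) := Measure.restrict_apply_le _ _
        _ ≤ volume {s : ℝ | T s x ∈ N} := measure_mono fun s hs => hs.2
        _ = 0 := hkey x
    simp only [hz, lintegral_zero]
  have hN0 : μ N = 0 := by rw [← h1, h2]
  have hNae : ∀ᵐ x ∂μ, x ∉ N := by
    rw [ae_iff]
    simpa [not_not] using hN0
  filter_upwards [hNae] with x hx hxA
  have hQx : Q x := by
    by_contra hc
    exact hx ⟨hxA, hc⟩
  refine (aux_tendsto_of_rat (E x) hQx).congr fun τ => ?_
  rw [hset x τ]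
end

section
/- Let {T^t}_{t∈ℝ} be a measurable measure-preserving flow on a probability space (X, ℬ, μ), and let A ∈ ℬ. For τ > 0 and x ∈ X define m_τ^A(x) = (1/(2τ)) · Leb({t ∈ [−τ, τ] : T^t(x) ∈ A}). Then lim_{τ→0⁺} ∫_A m_τ^A(x) dμ(x) = μ(A). -/
open MeasureTheory Filter Set
open scoped Topology

private lemma bdd_integrable {α : Type*} [MeasurableSpace α] {ν : Measure α}
    [IsFiniteMeasure ν] {f : α → ℝ} (hf : AEStronglyMeasurable f ν)
    (h : ∀ x, ‖f x‖ ≤ 1) : Integrable f ν :=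
  (integrable_const (1 : ℝ)).mono' hf (Eventually.of_forall h)

set_option maxHeartbeats 8000000 in
theorem integral_local_time_density_tendsto_measure
    {X : Type*} [MeasurableSpace X] (μ : Measure X) [IsProbabilityMeasure μ]
    (T : ℝ → X → X)
    (hT0 : T 0 = id) (hTadd : ∀ s t : ℝ, T (t + s) = T t ∘ T s)
    (hTmeas : Measurable fun p : ℝ × X => T p.1 p.2)
    (hTpres : ∀ t : ℝ, MeasurePreserving (T t) μ μ)
    (A : Set X) (hA : MeasurableSet A) :
    Tendsto (fun τ : ℝ =>
        ∫ x in A, (1 / (2 * τ)) * (volume {t : ℝ | t ∈ Icc (-τ) τ ∧ T t x ∈ A}).toReal ∂μ)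
      (nhdsWithin 0 (Ioi 0)) (nhds (μ A).toReal) := by
  classical
  have hTm : ∀ t : ℝ, Measurable (T t) := fun t => hTmeas.comp measurable_prodMk_left
  have hTmx : ∀ x : X, Measurable fun t : ℝ => T t x :=
    fun x => hTmeas.comp (measurable_id.prodMk measurable_const)
  set H : ℝ → X → ℝ := fun t x => A.indicator 1 (T t x) with hHdef
  have hHum : Measurable fun p : ℝ × X => H p.1 p.2 := (measurable_one.indicator hA).comp hTmeas
  have hHm : ∀ t, Measurable (H t) := fun t => hHum.comp measurable_prodMk_left
  have hHmt : ∀ x, Measurable fun t => H t x :=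
    fun x => hHum.comp (measurable_id.prodMk measurable_const)
  have hHnn : ∀ t x, 0 ≤ H t x := fun t x => Set.indicator_nonneg (fun _ _ => zero_le_one) _
  have hHle : ∀ t x, H t x ≤ 1 := by
    intro t x
    by_cases h : T t x ∈ A <;> simp [hHdef, Set.indicator_apply, h]
  have hHnorm : ∀ t x, ‖H t x‖ ≤ 1 := fun t x => by
    rw [Real.norm_eq_abs, abs_of_nonneg (hHnn t x)]; exact hHle t x
  have hidem : ∀ t x, H t x * H t x = H t x := by
    intro t x
    by_cases h : T t x ∈ A <;> simp [hHdef, Set.indicator_apply, h]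
  have hindm : Measurable (A.indicator (1 : X → ℝ)) := measurable_one.indicator hA
  -- correlation function
  set Φ : ℝ → ℝ := fun u => ∫ x, A.indicator 1 x * H u x ∂μ with hΦdef
  clear_value H Φ
  -- invariance identity
  have hK1 : ∀ s u : ℝ, (∫ x, H s x * H (s + u) x ∂μ) = Φ u := by
    intro s u
    have hco : (fun x => H s x * H (s + u) x)
        = fun x => (fun y => A.indicator (1 : X → ℝ) y * H u y) (T s x) := by
      funext x
      have h1 : T (s + u) x = T u (T s x) := by
        rw [add_comm s u, hTadd s u]; rfl
      simp only [hHdef, h1]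
    have hm' : AEStronglyMeasurable (fun y => A.indicator (1 : X → ℝ) y * H u y)
        (Measure.map (T s) μ) := by
      rw [(hTpres s).map_eq]
      exact (hindm.mul (hHm u)).aestronglyMeasurable
    rw [hco]
    calc (∫ x, (fun y => A.indicator (1 : X → ℝ) y * H u y) (T s x) ∂μ)
        = ∫ y, A.indicator (1 : X → ℝ) y * H u y ∂(Measure.map (T s) μ) :=
          (integral_map (hTm s).aemeasurable hm').symm
      _ = Φ u := by rw [(hTpres s).map_eq, hΦdef]
  -- ∫ H s x dμ = μ A
  have hμH : ∀ s : ℝ, (∫ x, H s x ∂μ) = (μ A).toReal := by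
    intro s
    simp only [hHdef]
    have hm' : AEStronglyMeasurable (A.indicator (1 : X → ℝ)) (Measure.map (T s) μ) := by
      rw [(hTpres s).map_eq]; exact hindm.aestronglyMeasurable
    calc (∫ x, A.indicator (1 : X → ℝ) (T s x) ∂μ)
        = ∫ y, A.indicator (1 : X → ℝ) y ∂(Measure.map (T s) μ) :=
          (integral_map (hTm s).aemeasurable hm').symm
      _ = ∫ y, A.indicator (1 : X → ℝ) y ∂μ := by rw [(hTpres s).map_eq]
      _ = (μ A).toReal := integral_indicator_one hA
  -- rewriting the sojourn-time as an integral
  have hvol : ∀ (τ : ℝ) (x : X),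
      (volume {t : ℝ | t ∈ Icc (-τ) τ ∧ T t x ∈ A}).toReal
        = ∫ t in Icc (-τ) τ, H t x ∂volume := by
    intro τ x
    have hBm : MeasurableSet ((fun t : ℝ => T t x) ⁻¹' A) := (hTmx x) hA
    have hfun : ∀ t : ℝ, H t x
        = ((fun t : ℝ => T t x) ⁻¹' A).indicator (fun _ => (1 : ℝ)) t := by
      intro t
      by_cases h : T t x ∈ A <;> simp [hHdef, Set.indicator_apply, h, Set.mem_preimage]
    simp_rw [hfun]
    rw [setIntegral_indicator hBm, setIntegral_const, smul_eq_mul, mul_one]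
    rfl
  have finIcc : ∀ a b : ℝ, IsFiniteMeasure (volume.restrict (Icc a b)) := by
    intro a b
    constructor
    rw [Measure.restrict_apply_univ]
    exact isCompact_Icc.measure_lt_top
  haveI finA : IsFiniteMeasure (μ.restrict A) := by
    constructor
    rw [Measure.restrict_apply_univ]
    exact measure_lt_top μ A
  -- ∫_A H t dμ = Φ t
  have hAint : ∀ t : ℝ, (∫ x in A, H t x ∂μ) = Φ t := by
    intro t
    have h1 : ∀ x, A.indicator (fun x => H t x) x = A.indicator (1 : X → ℝ) x * H t x := by
      intro x; by_cases h : x ∈ A <;> simp [Set.indicator_apply, h]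
    rw [← integral_indicator hA]
    simp only [hΦdef]
    simp only [h1]
  -- Fubini: over A
  have hswapA : ∀ τ : ℝ,
      (∫ x in A, ∫ t in Icc (-τ) τ, H t x ∂volume ∂μ)
        = ∫ t in Icc (-τ) τ, Φ t ∂volume := by
    intro τ
    haveI := finIcc (-τ) τ
    have hint : Integrable (Function.uncurry fun (x : X) (t : ℝ) => H t x)
        ((μ.restrict A).prod (volume.restrict (Icc (-τ) τ))) := by
      refine bdd_integrable ?_ ?_
      · exact (hHum.comp measurable_swap).aestronglyMeasurable
      · intro p; exact hHnorm p.2 p.1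
    rw [integral_integral_swap hint]
    simp_rw [hAint]
  -- Fubini: the correlation identity
  have hswapB : ∀ s τ : ℝ, 0 < τ →
      (∫ x, H s x * ∫ t in Icc (s - τ) (s + τ), H t x ∂volume ∂μ)
        = ∫ t in Icc (-τ) τ, Φ t ∂volume := by
    intro s τ hτ
    haveI := finIcc (s - τ) (s + τ)
    have h1 : ∀ x : X, (H s x * ∫ t in Icc (s - τ) (s + τ), H t x ∂volume)
        = ∫ t in Icc (s - τ) (s + τ), H s x * H t x ∂volume := by
      intro x; rw [integral_const_mul]
    simp_rw [h1]
    have hint : Integrable (Function.uncurry fun (x : X) (t : ℝ) => H s x * H t x)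
        (μ.prod (volume.restrict (Icc (s - τ) (s + τ)))) := by
      refine bdd_integrable ?_ ?_
      · exact (((hHm s).comp measurable_fst).mul
          (hHum.comp measurable_swap)).aestronglyMeasurable
      · intro p
        show ‖H s p.1 * H p.2 p.1‖ ≤ 1
        rw [norm_mul]
        calc ‖H s p.1‖ * ‖H p.2 p.1‖ ≤ 1 * 1 :=
              mul_le_mul (hHnorm s p.1) (hHnorm p.2 p.1) (norm_nonneg _) zero_le_one
          _ = 1 := one_mul 1
    rw [integral_integral_swap hint]
    have h2 : ∀ t : ℝ, (∫ x, H s x * H t x ∂μ) = Φ (t - s) := by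
      intro t
      have h3 := hK1 s (t - s)
      rwa [show s + (t - s) = t by ring] at h3
    simp_rw [h2]
    have hle1 : s - τ ≤ s + τ := by linarith
    have hle2 : -τ ≤ τ := by linarith
    rw [integral_Icc_eq_integral_Ioc, integral_Icc_eq_integral_Ioc,
      ← intervalIntegral.integral_of_le hle1, ← intervalIntegral.integral_of_le hle2]
    have h4 := intervalIntegral.integral_comp_sub_right (a := s - τ) (b := s + τ)
      (fun u => Φ u) s
    rw [show s - τ - s = -τ by ring, show s + τ - s = τ by ring] at h4
    exact h4
  -- measurability of the local average in both variables
  have hWm : ∀ τ : ℝ, Measurable fun p : X × ℝ =>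
      ∫ t in Icc (p.2 - τ) (p.2 + τ), H t p.1 ∂volume := by
    intro τ
    have h0 : ∀ p : X × ℝ, (∫ t in Icc (p.2 - τ) (p.2 + τ), H t p.1 ∂volume)
        = ∫ t, (Icc (p.2 - τ) (p.2 + τ)).indicator (fun t => H t p.1) t ∂volume := by
      intro p; rw [integral_indicator measurableSet_Icc]
    simp_rw [h0]
    have hs : MeasurableSet {q : (X × ℝ) × ℝ | q.2 ∈ Icc (q.1.2 - τ) (q.1.2 + τ)} := by
      have h1 : MeasurableSet {q : (X × ℝ) × ℝ | q.1.2 - τ ≤ q.2} :=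
        measurableSet_le (measurable_fst.snd.sub measurable_const) measurable_snd
      have h2 : MeasurableSet {q : (X × ℝ) × ℝ | q.2 ≤ q.1.2 + τ} :=
        measurableSet_le measurable_snd (measurable_fst.snd.add measurable_const)
      have h3 : {q : (X × ℝ) × ℝ | q.2 ∈ Icc (q.1.2 - τ) (q.1.2 + τ)}
          = {q : (X × ℝ) × ℝ | q.1.2 - τ ≤ q.2} ∩ {q : (X × ℝ) × ℝ | q.2 ≤ q.1.2 + τ} := by
        ext q; simp [Set.mem_Icc]
      rw [h3]; exact h1.inter h2
    have hm : Measurable fun q : (X × ℝ) × ℝ =>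
        (Icc (q.1.2 - τ) (q.1.2 + τ)).indicator (fun t => H t q.1.1) q.2 := by
      simp_rw [Set.indicator_apply]
      exact Measurable.ite hs
        (hHum.comp (measurable_snd.prodMk measurable_fst.fst)) measurable_const
    exact hm.stronglyMeasurable.integral_prod_right'.measurable
  have hWmx : ∀ (τ : ℝ) (x : X), Measurable fun s : ℝ =>
      ∫ t in Icc (s - τ) (s + τ), H t x ∂volume := by
    intro τ x
    have h0 : ∀ s : ℝ, (∫ t in Icc (s - τ) (s + τ), H t x ∂volume)
        = ∫ t, (Icc (s - τ) (s + τ)).indicator (fun t => H t x) t ∂volume := by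
      intro s; rw [integral_indicator measurableSet_Icc]
    simp_rw [h0]
    have hm : Measurable fun q : ℝ × ℝ =>
        (Icc (q.1 - τ) (q.1 + τ)).indicator (fun t => H t x) q.2 := by
      simp_rw [Set.indicator_apply]
      refine Measurable.ite ?_ ((hHmt x).comp measurable_snd) measurable_const
      have h1 : MeasurableSet {q : ℝ × ℝ | q.1 - τ ≤ q.2} :=
        measurableSet_le (measurable_fst.sub measurable_const) measurable_snd
      have h2 : MeasurableSet {q : ℝ × ℝ | q.2 ≤ q.1 + τ} :=
        measurableSet_le measurable_snd (measurable_fst.add measurable_const)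
      have h3 : {q : ℝ × ℝ | q.2 ∈ Icc (q.1 - τ) (q.1 + τ)}
          = {q : ℝ × ℝ | q.1 - τ ≤ q.2} ∩ {q : ℝ × ℝ | q.2 ≤ q.1 + τ} := by
        ext q; simp [Set.mem_Icc]
      rw [h3]; exact h1.inter h2
    exact hm.stronglyMeasurable.integral_prod_right'.measurable
  have hWnn : ∀ (τ : ℝ) (x : X) (s : ℝ),
      0 ≤ ∫ t in Icc (s - τ) (s + τ), H t x ∂volume :=
    fun τ x s => setIntegral_nonneg measurableSet_Icc fun t _ => hHnn t x
  have hWle : ∀ τ : ℝ, 0 < τ → ∀ (x : X) (s : ℝ),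
      (∫ t in Icc (s - τ) (s + τ), H t x ∂volume) ≤ 2 * τ := by
    intro τ hτ x s
    haveI := finIcc (s - τ) (s + τ)
    have h1 : (∫ t in Icc (s - τ) (s + τ), H t x ∂volume)
        ≤ ∫ _t in Icc (s - τ) (s + τ), (1 : ℝ) ∂volume := by
      refine integral_mono ?_ (integrable_const 1) ?_
      · exact bdd_integrable (hHmt x).aestronglyMeasurable (fun t => hHnorm t x)
      · intro t; exact hHle t x
    rw [setIntegral_const, smul_eq_mul, mul_one, measureReal_def, Real.volume_Icc,
      show s + τ - (s - τ) = 2 * τ by ring, ENNReal.toReal_ofReal (by linarith)] at h1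
    exact h1
  have hcW : ∀ τ : ℝ, 0 < τ → ∀ (x : X) (s : ℝ),
      ‖H s x * ((1 / (2 * τ)) * ∫ t in Icc (s - τ) (s + τ), H t x ∂volume)‖ ≤ 1 := by
    intro τ hτ x s
    have h2τ : (0 : ℝ) < 2 * τ := by linarith
    have hc : (0 : ℝ) ≤ 1 / (2 * τ) := by positivity
    have h1 : (1 / (2 * τ)) * (∫ t in Icc (s - τ) (s + τ), H t x ∂volume) ≤ 1 := by
      calc (1 / (2 * τ)) * (∫ t in Icc (s - τ) (s + τ), H t x ∂volume)
          ≤ (1 / (2 * τ)) * (2 * τ) := mul_le_mul_of_nonneg_left (hWle τ hτ x s) hc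
        _ = 1 := by field_simp
    have h0 : 0 ≤ (1 / (2 * τ)) * (∫ t in Icc (s - τ) (s + τ), H t x ∂volume) :=
      mul_nonneg hc (hWnn τ x s)
    rw [norm_mul, Real.norm_eq_abs, Real.norm_eq_abs, abs_of_nonneg (hHnn s x),
      abs_of_nonneg h0]
    calc H s x * ((1 / (2 * τ)) * ∫ t in Icc (s - τ) (s + τ), H t x ∂volume)
        ≤ 1 * 1 := mul_le_mul (hHle s x) h1 h0 zero_le_one
      _ = 1 := one_mul 1
  -- the key identity
  have hkey : ∀ τ : ℝ, 0 < τ →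
      (∫ x in A, (1 / (2 * τ)) * ∫ t in Icc (-τ) τ, H t x ∂volume ∂μ)
        = ∫ x, ∫ s in Icc (0 : ℝ) 1, H s x *
            ((1 / (2 * τ)) * ∫ t in Icc (s - τ) (s + τ), H t x ∂volume) ∂volume ∂μ := by
    intro τ hτ
    haveI := finIcc (0 : ℝ) 1
    rw [integral_const_mul, hswapA τ]
    have hintC : Integrable (Function.uncurry fun (x : X) (s : ℝ) =>
        H s x * ((1 / (2 * τ)) * ∫ t in Icc (s - τ) (s + τ), H t x ∂volume))
        (μ.prod (volume.restrict (Icc (0 : ℝ) 1))) := by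
      refine bdd_integrable ?_ ?_
      · exact ((hHum.comp measurable_swap).mul
          (measurable_const.mul (hWm τ))).aestronglyMeasurable
      · intro p; exact hcW τ hτ p.1 p.2
    rw [integral_integral_swap hintC]
    have hinner : ∀ s : ℝ,
        (∫ x, H s x * ((1 / (2 * τ)) * ∫ t in Icc (s - τ) (s + τ), H t x ∂volume) ∂μ)
          = (1 / (2 * τ)) * ∫ t in Icc (-τ) τ, Φ t ∂volume := by
      intro s
      have h5 : ∀ x : X, H s x * ((1 / (2 * τ)) * ∫ t in Icc (s - τ) (s + τ), H t x ∂volume)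
          = (1 / (2 * τ)) * (H s x * ∫ t in Icc (s - τ) (s + τ), H t x ∂volume) := by
        intro x; ring
      simp_rw [h5]
      rw [integral_const_mul, hswapB s τ hτ]
    simp_rw [hinner]
    rw [setIntegral_const, smul_eq_mul, measureReal_def, Real.volume_Icc]
    norm_num
  -- measurability of the inner integral as a function of x
  have hmeas01 : ∀ τ : ℝ, AEStronglyMeasurable (fun x => ∫ s in Icc (0 : ℝ) 1,
      H s x * ((1 / (2 * τ)) * ∫ t in Icc (s - τ) (s + τ), H t x ∂volume) ∂volume) μ := by
    intro τ
    apply Measurable.aestronglyMeasurable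
    have hm : Measurable fun p : X × ℝ =>
        H p.2 p.1 * ((1 / (2 * τ)) * ∫ t in Icc (p.2 - τ) (p.2 + τ), H t p.1 ∂volume) :=
      (hHum.comp measurable_swap).mul (measurable_const.mul (hWm τ))
    exact hm.stronglyMeasurable.integral_prod_right'.measurable
  -- the limit value
  have hval : (∫ x, ∫ s in Icc (0 : ℝ) 1, H s x ∂volume ∂μ) = (μ A).toReal := by
    haveI := finIcc (0 : ℝ) 1
    have hint : Integrable (Function.uncurry fun (x : X) (s : ℝ) => H s x)
        (μ.prod (volume.restrict (Icc (0 : ℝ) 1))) :=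
      bdd_integrable (hHum.comp measurable_swap).aestronglyMeasurable
        (fun p => hHnorm p.2 p.1)
    rw [integral_integral_swap hint]
    simp_rw [hμH]
    rw [setIntegral_const, smul_eq_mul, measureReal_def, Real.volume_Icc]
    norm_num
  -- pointwise (in x) convergence of the inner integral, by Lebesgue differentiation
  have hptwise : ∀ x : X, Tendsto (fun τ : ℝ => ∫ s in Icc (0 : ℝ) 1,
      H s x * ((1 / (2 * τ)) * ∫ t in Icc (s - τ) (s + τ), H t x ∂volume) ∂volume)
      (𝓝[>] (0 : ℝ)) (𝓝 (∫ s in Icc (0 : ℝ) 1, H s x ∂volume)) := by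
    intro x
    have hloc : LocallyIntegrable (fun t => H t x) volume :=
      (memLp_top_of_bound (hHmt x).aestronglyMeasurable 1
        (Eventually.of_forall fun t => hHnorm t x)).locallyIntegrable le_top
    have hae : ∀ᵐ s ∂(volume : Measure ℝ),
        Tendsto (fun τ : ℝ => (1 / (2 * τ)) * ∫ t in Icc (s - τ) (s + τ), H t x ∂volume)
          (𝓝[>] 0) (𝓝 (H s x)) := by
      filter_upwards [IsUnifLocDoublingMeasure.ae_tendsto_average
        (μ := (volume : Measure ℝ)) hloc 1] with s hs
      have hmem : ∀ᶠ τ : ℝ in 𝓝[>] 0,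
          s ∈ Metric.closedBall ((fun _ : ℝ => s) τ) (1 * (id τ)) := by
        filter_upwards [self_mem_nhdsWithin] with τ hτ
        simp only [one_mul, id_eq]
        exact Metric.mem_closedBall_self (le_of_lt hτ)
      have h6 := hs (fun _ => s) id tendsto_id hmem
      refine Tendsto.congr' ?_ h6
      filter_upwards [self_mem_nhdsWithin] with τ hτ
      have hτ' : (0 : ℝ) < τ := hτ
      rw [id_eq, Real.closedBall_eq_Icc, setAverage_eq, smul_eq_mul, measureReal_def, Real.volume_Icc,
        show s + τ - (s - τ) = 2 * τ by ring, ENNReal.toReal_ofReal (by linarith),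
        one_div]
    have hlim_s : ∀ᵐ s ∂(volume.restrict (Icc (0 : ℝ) 1)),
        Tendsto (fun τ : ℝ =>
            H s x * ((1 / (2 * τ)) * ∫ t in Icc (s - τ) (s + τ), H t x ∂volume))
          (𝓝[>] 0) (𝓝 (H s x)) := by
      refine ae_restrict_of_ae ?_
      filter_upwards [hae] with s hs
      have h7 := hs.const_mul (H s x)
      rwa [hidem s x] at h7
    haveI := finIcc (0 : ℝ) 1
    refine tendsto_integral_filter_of_dominated_convergence (bound := fun _ => (1 : ℝ))
      ?_ ?_ ?_ hlim_s
    · filter_upwards [self_mem_nhdsWithin] with τ hτ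
      apply Measurable.aestronglyMeasurable
      refine Measurable.mul (hHmt x) (measurable_const.mul ?_)
      exact hWmx τ x
    · filter_upwards [self_mem_nhdsWithin] with τ hτ
      exact ae_of_all _ fun s => hcW τ hτ x s
    · exact integrable_const 1
  -- dominated convergence in x
  have hlim : Tendsto (fun τ : ℝ => ∫ x, ∫ s in Icc (0 : ℝ) 1,
      H s x * ((1 / (2 * τ)) * ∫ t in Icc (s - τ) (s + τ), H t x ∂volume) ∂volume ∂μ)
      (𝓝[>] (0 : ℝ)) (𝓝 ((μ A).toReal)) := by
    rw [← hval]
    refine tendsto_integral_filter_of_dominated_convergence (bound := fun _ => (1 : ℝ))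
      ?_ ?_ ?_ (ae_of_all _ hptwise)
    · exact Eventually.of_forall hmeas01
    · filter_upwards [self_mem_nhdsWithin] with τ hτ
      refine ae_of_all _ fun x => ?_
      have hbd := norm_setIntegral_le_of_norm_le_const (μ := volume)
        (s := Icc (0 : ℝ) 1) (C := 1)
        (by rw [Real.volume_Icc]; norm_num)
        (fun s _ => hcW τ hτ x s)
      calc ‖∫ s in Icc (0 : ℝ) 1,
            H s x * ((1 / (2 * τ)) * ∫ t in Icc (s - τ) (s + τ), H t x ∂volume) ∂volume‖
          ≤ 1 * (volume (Icc (0 : ℝ) 1)).toReal := hbd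
        _ = 1 := by rw [Real.volume_Icc]; norm_num
    · exact integrable_const 1
  -- conclusion
  have hF : Tendsto (fun τ : ℝ =>
      ∫ x in A, (1 / (2 * τ)) * ∫ t in Icc (-τ) τ, H t x ∂volume ∂μ)
      (𝓝[>] (0 : ℝ)) (𝓝 ((μ A).toReal)) := by
    refine Tendsto.congr' ?_ hlim
    filter_upwards [self_mem_nhdsWithin] with τ hτ
    exact (hkey τ hτ).symm
  refine Tendsto.congr (fun τ => ?_) hF
  refine integral_congr_ae (Eventually.of_forall fun x => ?_)
  simp only [hvol]
end
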